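/- Let p be an odd prime and j ≥ 1 an integer. With respect to the normalized Haar probability measure on the compact group SL₂(ℤ_p), the measure of the set {k ∈ SL₂(ℤ_p) : ‖k₂₁‖_p ≤ p^{−j}}, where k₂₁ denotes the lower-left entry of k, equals (p/(p+1))·p^{−j}. -/

import Mathlib

set_option linter.unusedVariables false
open MeasureTheory
/-- The topology on `SL₂(ℤ_p)` induced from the (compact) space of `2×2` matrices
over `ℤ_p`. -/
noncomputable instance SL2Zp.topologicalSpace (p : ℕ) [Fact p.Prime] :
    TopologicalSpace (Matrix.SpecialLinearGroup (Fin 2) ℤ_[p]) :=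
  TopologicalSpace.induced (fun A => (A : Matrix (Fin 2) (Fin 2) ℤ_[p])) inferInstance
/-- The Borel σ-algebra on `SL₂(ℤ_p)`. -/
noncomputable instance SL2Zp.measurableSpace (p : ℕ) [Fact p.Prime] :
    MeasurableSpace (Matrix.SpecialLinearGroup (Fin 2) ℤ_[p]) := borel _

variable (p : ℕ) [Fact p.Prime]
abbrev SL2 := Matrix.SpecialLinearGroup (Fin 2) ℤ_[p]

instance : BorelSpace (SL2 p) := ⟨rfl⟩

lemma contCoe : Continuous (fun k : SL2 p => (k : Matrix (Fin 2) (Fin 2) ℤ_[p])) :=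
  continuous_induced_dom

lemma contEntry : Continuous (fun k : SL2 p => (k : Matrix (Fin 2) (Fin 2) ℤ_[p]) 1 0) := by
  exact ((continuous_apply (0 : Fin 2)).comp (continuous_apply (1 : Fin 2))).comp (contCoe p)

lemma measurable_mulLeft (g : SL2 p) : Measurable (fun k : SL2 p => g * k) := by
  have : Continuous (fun k : SL2 p => g * k) := by
    apply continuous_induced_rng.2
    exact continuous_const.matrix_mul (contCoe p)
  exact this.measurable

noncomputable def Umat (s : ℤ_[p]) : SL2 p :=
  ⟨!![1, 0; s, 1], by simp [Matrix.det_fin_two_of]⟩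

noncomputable def Wmat : SL2 p :=
  ⟨!![0, 1; -1, 0], by simp [Matrix.det_fin_two_of]⟩

lemma Umat_mul_entry (s : ℤ_[p]) (k : SL2 p) :
    ((Umat p s * k : SL2 p) : Matrix (Fin 2) (Fin 2) ℤ_[p]) 1 0
      = s * (k : Matrix (Fin 2) (Fin 2) ℤ_[p]) 0 0 + (k : Matrix (Fin 2) (Fin 2) ℤ_[p]) 1 0 := by
  rw [Matrix.SpecialLinearGroup.coe_mul]
  simp [Umat, Matrix.mul_apply, Fin.sum_univ_two]

lemma Wmat_mul_entry (k : SL2 p) :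
    ((Wmat p * k : SL2 p) : Matrix (Fin 2) (Fin 2) ℤ_[p]) 1 0
      = -(k : Matrix (Fin 2) (Fin 2) ℤ_[p]) 0 0 := by
  rw [Matrix.SpecialLinearGroup.coe_mul]
  simp [Wmat, Matrix.mul_apply, Fin.sum_univ_two]

lemma not_dvd_ul (k : SL2 p) (h : (p : ℤ_[p]) ∣ (k : Matrix (Fin 2) (Fin 2) ℤ_[p]) 1 0) :
    ¬ (p : ℤ_[p]) ∣ (k : Matrix (Fin 2) (Fin 2) ℤ_[p]) 0 0 := by
  intro ha
  have hdet : (k : Matrix (Fin 2) (Fin 2) ℤ_[p]).det = 1 := k.2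
  rw [Matrix.det_fin_two] at hdet
  have : (p : ℤ_[p]) ∣ 1 := by
    rw [← hdet]
    exact dvd_sub (ha.mul_right _) (h.mul_left _)
  have := PadicInt.norm_lt_one_iff_dvd (1 : ℤ_[p]) |>.2 this
  simp at this

lemma dvd_iff_toZMod (x : ℤ_[p]) : (p : ℤ_[p]) ∣ x ↔ PadicInt.toZMod x = 0 := by
  rw [← RingHom.mem_ker, PadicInt.ker_toZMod, PadicInt.maximalIdeal_eq_span_p,
    Ideal.mem_span_singleton]

lemma toZMod_natCast_val (t : ZMod p) :
    PadicInt.toZMod ((t.val : ℤ_[p])) = t := by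
  haveI : NeZero p := ⟨(Fact.out : p.Prime).ne_zero⟩
  rw [map_natCast]
  simp [ZMod.natCast_val, ZMod.cast_id]

/-- The basic sets. -/
def Sset (j : ℕ) : Set (SL2 p) :=
  {k | (p : ℤ_[p]) ^ j ∣ (k : Matrix (Fin 2) (Fin 2) ℤ_[p]) 1 0}

lemma Sset_eq_norm (j : ℕ) :
    Sset p j = {k : SL2 p |
      ‖(k : Matrix (Fin 2) (Fin 2) ℤ_[p]) 1 0‖ ≤ (p : ℝ) ^ (-(j : ℤ))} := by
  ext k
  simp only [Sset, Set.mem_setOf_eq]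
  rw [PadicInt.norm_le_pow_iff_mem_span_pow, Ideal.mem_span_singleton]

lemma measurableSet_Sset (j : ℕ) : MeasurableSet (Sset p j) := by
  rw [Sset_eq_norm]
  have : IsClosed {k : SL2 p |
      ‖(k : Matrix (Fin 2) (Fin 2) ℤ_[p]) 1 0‖ ≤ (p : ℝ) ^ (-(j : ℤ))} :=
    isClosed_le (continuous_norm.comp (contEntry p)) continuous_const
  exact this.measurableSet

/-- Step covering: for `j ≥ 1`, `S j` is the disjoint union of `p` translates of `S (j+1)`. -/
lemma step_cover (j : ℕ) (hj : 1 ≤ j) :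
    Sset p j = ⋃ t : ZMod p,
      (fun k => Umat p ((t.val : ℤ_[p]) * (p : ℤ_[p]) ^ j) * k) ⁻¹' Sset p (j + 1) := by
  have hp0 : ((p : ℤ_[p])) ≠ 0 := Nat.cast_ne_zero.2 (Fact.out : p.Prime).ne_zero
  ext k
  set a := (k : Matrix (Fin 2) (Fin 2) ℤ_[p]) 0 0 with ha
  set c := (k : Matrix (Fin 2) (Fin 2) ℤ_[p]) 1 0 with hc
  simp only [Set.mem_iUnion, Set.mem_preimage, Sset, Set.mem_setOf_eq, Umat_mul_entry, ← ha, ← hc]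
  constructor
  · rintro ⟨c', hc'⟩
    have hpc : (p : ℤ_[p]) ∣ c := hc' ▸ (dvd_pow_self (p : ℤ_[p]) (by omega)).trans ⟨c', rfl⟩
    have hna : ¬ (p : ℤ_[p]) ∣ a := not_dvd_ul p k hpc
    have hna' : PadicInt.toZMod a ≠ 0 := fun h => hna ((dvd_iff_toZMod p a).2 h)
    refine ⟨-PadicInt.toZMod c' * (PadicInt.toZMod a)⁻¹, ?_⟩
    set t : ZMod p := -PadicInt.toZMod c' * (PadicInt.toZMod a)⁻¹ with htdef
    have key : (p : ℤ_[p]) ∣ (t.val : ℤ_[p]) * a + c' := by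
      rw [dvd_iff_toZMod]
      rw [map_add, map_mul, toZMod_natCast_val]
      rw [htdef]
      field_simp
      ring
    calc (p : ℤ_[p]) ^ (j + 1) = (p : ℤ_[p]) ^ j * (p : ℤ_[p]) := pow_succ _ _
    _ ∣ (p : ℤ_[p]) ^ j * ((t.val : ℤ_[p]) * a + c') := mul_dvd_mul_left _ key
    _ = (t.val : ℤ_[p]) * (p : ℤ_[p]) ^ j * a + c := by rw [hc']; ring
  · rintro ⟨t, ht⟩
    have h1 : (p : ℤ_[p]) ^ j ∣ (t.val : ℤ_[p]) * (p : ℤ_[p]) ^ j * a :=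
      (dvd_mul_left _ _).mul_right a
    have h2 : (p : ℤ_[p]) ^ j ∣ (t.val : ℤ_[p]) * (p : ℤ_[p]) ^ j * a + c :=
      (pow_dvd_pow _ (by omega)).trans ht
    have := dvd_sub h2 h1
    simpa using this

lemma step_disjoint (j : ℕ) (hj : 1 ≤ j) :
    Pairwise (Function.onFun Disjoint (fun t : ZMod p =>
      (fun k => Umat p ((t.val : ℤ_[p]) * (p : ℤ_[p]) ^ j) * k) ⁻¹' Sset p (j + 1))) := by
  have hp0 : ((p : ℤ_[p])) ≠ 0 := Nat.cast_ne_zero.2 (Fact.out : p.Prime).ne_zero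
  intro t t' hne
  rw [Function.onFun, Set.disjoint_left]
  intro k hk hk'
  set a := (k : Matrix (Fin 2) (Fin 2) ℤ_[p]) 0 0 with ha
  set c := (k : Matrix (Fin 2) (Fin 2) ℤ_[p]) 1 0 with hc
  simp only [Set.mem_preimage, Sset, Set.mem_setOf_eq, Umat_mul_entry, ← ha, ← hc] at hk hk'
  have hpc : (p : ℤ_[p]) ∣ c := by
    have h1 : (p : ℤ_[p]) ∣ (t.val : ℤ_[p]) * (p : ℤ_[p]) ^ j * a :=
      ((dvd_pow_self (p : ℤ_[p]) (by omega)).mul_left _).mul_right _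
    have h2 : (p : ℤ_[p]) ∣ (t.val : ℤ_[p]) * (p : ℤ_[p]) ^ j * a + c :=
      (dvd_pow_self (p : ℤ_[p]) (by omega)).trans hk
    simpa using dvd_sub h2 h1
  have hna : ¬ (p : ℤ_[p]) ∣ a := not_dvd_ul p k hpc
  have hdiff : (p : ℤ_[p]) ^ j * (p : ℤ_[p]) ∣
      (p : ℤ_[p]) ^ j * (((t.val : ℤ_[p]) - (t'.val : ℤ_[p])) * a) := by
    have := dvd_sub hk hk'
    rw [← pow_succ]
    convert this using 1
    ring
  have hdvd : (p : ℤ_[p]) ∣ ((t.val : ℤ_[p]) - (t'.val : ℤ_[p])) * a :=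
    (mul_dvd_mul_iff_left (pow_ne_zero j hp0)).1 hdiff
  rw [dvd_iff_toZMod, map_mul, map_sub, toZMod_natCast_val, toZMod_natCast_val] at hdvd
  have hna' : PadicInt.toZMod a ≠ 0 := fun h => hna ((dvd_iff_toZMod p a).2 h)
  rcases mul_eq_zero.1 hdvd with h | h
  · exact hne (by linear_combination h)
  · exact hna' h

/-- The translating elements for the base covering. -/
noncomputable def Gelt : Option (ZMod p) → SL2 p
  | none => Wmat p
  | some t => Umat p (t.val : ℤ_[p])

lemma base_cover :
    (Set.univ : Set (SL2 p)) = ⋃ i : Option (ZMod p),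
      (fun k => Gelt p i * k) ⁻¹' Sset p 1 := by
  ext k
  simp only [Set.mem_univ, true_iff, Set.mem_iUnion, Set.mem_preimage]
  set a := (k : Matrix (Fin 2) (Fin 2) ℤ_[p]) 0 0 with ha
  set c := (k : Matrix (Fin 2) (Fin 2) ℤ_[p]) 1 0 with hc
  by_cases hpa : (p : ℤ_[p]) ∣ a
  · exact ⟨none, by simpa [Gelt, Sset, Wmat_mul_entry, ← ha] using hpa.neg_right⟩
  · have hna' : PadicInt.toZMod a ≠ 0 := fun h => hpa ((dvd_iff_toZMod p a).2 h)
    refine ⟨some (-PadicInt.toZMod c * (PadicInt.toZMod a)⁻¹), ?_⟩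
    simp only [Gelt, Sset, Set.mem_setOf_eq, Umat_mul_entry, ← ha, ← hc, pow_one]
    rw [dvd_iff_toZMod, map_add, map_mul, toZMod_natCast_val]
    field_simp
    ring

lemma base_disjoint :
    Pairwise (Function.onFun Disjoint (fun i : Option (ZMod p) =>
      (fun k => Gelt p i * k) ⁻¹' Sset p 1)) := by
  intro i i' hne
  rw [Function.onFun, Set.disjoint_left]
  intro k hk hk'
  set a := (k : Matrix (Fin 2) (Fin 2) ℤ_[p]) 0 0 with ha
  set c := (k : Matrix (Fin 2) (Fin 2) ℤ_[p]) 1 0 with hc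
  have key : ∀ t : ZMod p, k ∈ (fun k => Gelt p (some t) * k) ⁻¹' Sset p 1 →
      ¬ (p : ℤ_[p]) ∣ a ∧ PadicInt.toZMod a * t + PadicInt.toZMod c = 0 := by
    intro t ht
    simp only [Set.mem_preimage, Gelt, Sset, Set.mem_setOf_eq, Umat_mul_entry, ← ha, ← hc,
      pow_one] at ht
    have hpc : (p : ℤ_[p]) ∣ c ∨ ¬ (p : ℤ_[p]) ∣ a := by
      by_cases hpa : (p : ℤ_[p]) ∣ a
      · exact Or.inl (by simpa using dvd_sub ht (hpa.mul_left ((t.val : ℤ_[p]))))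
      · exact Or.inr hpa
    have hna : ¬ (p : ℤ_[p]) ∣ a := by
      rcases hpc with h | h
      · exact not_dvd_ul p k h
      · exact h
    refine ⟨hna, ?_⟩
    rw [dvd_iff_toZMod, map_add, map_mul, toZMod_natCast_val] at ht
    linear_combination ht
  have keyW : k ∈ (fun k => Gelt p none * k) ⁻¹' Sset p 1 → (p : ℤ_[p]) ∣ a := by
    intro h
    simp only [Set.mem_preimage, Gelt, Sset, Set.mem_setOf_eq, Wmat_mul_entry, ← ha,
      pow_one] at h
    simpa using h.neg_right
  match i, i' with
  | none, none => exact hne rfl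
  | none, some t => exact (key t hk').1 (keyW hk)
  | some t, none => exact (key t hk).1 (keyW hk')
  | some t, some t' =>
    have h1 := key t hk
    have h2 := key t' hk'
    have : PadicInt.toZMod a * (t - t') = 0 := by linear_combination h1.2 - h2.2
    rcases mul_eq_zero.1 this with h | h
    · exact absurd ((dvd_iff_toZMod p a).2 h) h1.1
    · exact hne (congrArg some (by linear_combination h))

section Measures

variable (μ : Measure (SL2 p)) [μ.IsMulLeftInvariant]

lemma measure_translate (g : SL2 p) {A : Set (SL2 p)} (hA : MeasurableSet A) :
    μ ((fun k => g * k) ⁻¹' A) = μ A := by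
  conv_rhs => rw [← MeasureTheory.map_mul_left_eq_self μ g]
  rw [Measure.map_apply (measurable_mulLeft p g) hA]

lemma base_measure : μ Set.univ = ((p : ENNReal) + 1) * μ (Sset p 1) := by
  rw [base_cover p]
  rw [measure_iUnion (base_disjoint p)
    (fun i => (measurable_mulLeft p (Gelt p i)) (measurableSet_Sset p 1))]
  rw [tsum_fintype]
  have : ∀ i : Option (ZMod p),
      μ ((fun k => Gelt p i * k) ⁻¹' Sset p 1) = μ (Sset p 1) := fun i =>
    measure_translate p μ (Gelt p i) (measurableSet_Sset p 1)
  rw [Finset.sum_congr rfl (fun i _ => this i), Finset.sum_const]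
  simp [ZMod.card, mul_comm, add_comm]

lemma step_measure (j : ℕ) (hj : 1 ≤ j) :
    μ (Sset p j) = (p : ENNReal) * μ (Sset p (j + 1)) := by
  rw [step_cover p j hj]
  rw [measure_iUnion (step_disjoint p j hj)
    (fun t => (measurable_mulLeft p _) (measurableSet_Sset p (j + 1)))]
  rw [tsum_fintype]
  have : ∀ t : ZMod p,
      μ ((fun k => Umat p ((t.val : ℤ_[p]) * (p : ℤ_[p]) ^ j) * k) ⁻¹' Sset p (j + 1))
        = μ (Sset p (j + 1)) := fun t =>
    measure_translate p μ _ (measurableSet_Sset p (j + 1))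
  rw [Finset.sum_congr rfl (fun t _ => this t), Finset.sum_const]
  simp [ZMod.card, mul_comm]

lemma induct_measure (hprob : IsProbabilityMeasure μ) (n : ℕ) :
    ((p : ENNReal) ^ n * ((p : ENNReal) + 1)) * μ (Sset p (n + 1)) = 1 := by
  induction n with
  | zero => simpa using (base_measure p μ).symm.trans hprob.measure_univ
  | succ n ih =>
    have hs := step_measure p μ (n + 1) (by omega)
    calc ((p : ENNReal) ^ (n + 1) * ((p : ENNReal) + 1)) * μ (Sset p (n + 2))
        = ((p : ENNReal) ^ n * ((p : ENNReal) + 1)) * ((p : ENNReal) * μ (Sset p (n + 2))) := by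
          ring
      _ = ((p : ENNReal) ^ n * ((p : ENNReal) + 1)) * μ (Sset p (n + 1)) := by rw [← hs]
      _ = 1 := ih

lemma measure_Sset (hprob : IsProbabilityMeasure μ) (n : ℕ) :
    μ (Sset p (n + 1)) = ((p : ENNReal) ^ n * ((p : ENNReal) + 1))⁻¹ := by
  have h := induct_measure p μ hprob n
  have hA0 : ((p : ENNReal) ^ n * ((p : ENNReal) + 1)) ≠ 0 := by
    have : (p : ENNReal) ≠ 0 := by
      simp [Nat.cast_ne_zero, (Fact.out : p.Prime).ne_zero]
    exact mul_ne_zero (pow_ne_zero _ this) (by simp)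
  have hAt : ((p : ENNReal) ^ n * ((p : ENNReal) + 1)) ≠ ⊤ := by
    refine ENNReal.mul_ne_top (ENNReal.pow_ne_top (ENNReal.natCast_ne_top p)) ?_
    exact ENNReal.add_ne_top.2 ⟨ENNReal.natCast_ne_top p, ENNReal.one_ne_top⟩
  calc μ (Sset p (n + 1))
      = ((p : ENNReal) ^ n * ((p : ENNReal) + 1))⁻¹
          * (((p : ENNReal) ^ n * ((p : ENNReal) + 1)) * μ (Sset p (n + 1))) := by
        rw [← mul_assoc, ENNReal.inv_mul_cancel hA0 hAt, one_mul]
    _ = ((p : ENNReal) ^ n * ((p : ENNReal) + 1))⁻¹ := by rw [h, mul_one]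

end Measures

/-- With respect to the Haar probability measure on the compact group `SL₂(ℤ_p)`
(`p` an odd prime), the set of matrices whose lower-left entry has norm at most `p^{−j}`
(`j ≥ 1`) has measure `(p/(p+1))·p^{−j}`. -/
theorem haar_measure_lower_left_entry_small (p : ℕ) [Fact p.Prime] (hp : Odd p)
    (j : ℕ) (hj : 1 ≤ j)
    (μ : Measure (Matrix.SpecialLinearGroup (Fin 2) ℤ_[p]))
    (hμ : μ.IsHaarMeasure) (hprob : IsProbabilityMeasure μ) :
    μ {k : Matrix.SpecialLinearGroup (Fin 2) ℤ_[p] |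
        ‖(k : Matrix (Fin 2) (Fin 2) ℤ_[p]) 1 0‖ ≤ (p : ℝ) ^ (-(j : ℤ))} =
      ENNReal.ofReal ((p / (p + 1) : ℝ) * (p : ℝ) ^ (-(j : ℤ))) := by
  haveI : μ.IsMulLeftInvariant := hμ.toIsMulLeftInvariant
  obtain ⟨n, rfl⟩ : ∃ n, j = n + 1 := ⟨j - 1, by omega⟩
  rw [← Sset_eq_norm p (n + 1), measure_Sset p μ hprob n]
  have hp0 : (0 : ℝ) < p := by exact_mod_cast (Fact.out : p.Prime).pos
  have hp1 : (0 : ℝ) < (p : ℝ) + 1 := by linarith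
  have hreal : ((p : ℝ) / ((p : ℝ) + 1)) * (p : ℝ) ^ (-((n + 1 : ℕ) : ℤ))
      = ((p : ℝ) ^ n * ((p : ℝ) + 1))⁻¹ := by
    rw [zpow_neg, zpow_natCast]
    field_simp
    ring
  rw [hreal, ENNReal.ofReal_inv_of_pos (by positivity)]
  congr 1
  rw [ENNReal.ofReal_mul (by positivity), ENNReal.ofReal_pow hp0.le,
    ENNReal.ofReal_add hp0.le zero_le_one, ENNReal.ofReal_natCast, ENNReal.ofReal_one]
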